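/- For p, q ∈ [0, π/2], the area of the symmetric difference of the aligned unit rhombi R_p and R_q satisfies the expansion k(p, p+ε) = ε·(sin⁴(p/2) + cos⁴(p/2)) + O(ε²) as ε → 0⁺, where k(p,q) = 8·(sin²(|p−q|/4)/sin(|p−q|/2))·(sin²((p+q)/4)·sin(p/2)·sin(q/2) + cos²((p+q)/4)·cos(p/2)·cos(q/2)). -/

import Mathlib

open Real Filter Asymptotics
open scoped Topology

/-- Area of the symmetric difference of the aligned unit rhombi `R_p` and `R_q`. -/
noncomputable def kRhombus (p q : ℝ) : ℝ :=
  if p = q then 0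
  else 8 * (Real.sin (|p - q| / 4) ^ 2 / Real.sin (|p - q| / 2)) *
    (Real.sin ((p + q) / 4) ^ 2 * Real.sin (p / 2) * Real.sin (q / 2) +
      Real.cos ((p + q) / 4) ^ 2 * Real.cos (p / 2) * Real.cos (q / 2))

lemma tan_taylor_bound {ε : ℝ} (h0 : 0 < ε) (h1 : ε ≤ 1) :
    |4 * Real.tan (ε / 4) - ε| ≤ ε ^ 2 := by
  have hx0 : 0 < ε / 4 := by linarith
  have hx1 : ε / 4 ≤ 1 := by linarith
  have hsl : Real.sin (ε / 4) < ε / 4 := Real.sin_lt hx0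
  have hsg : ε / 4 - (ε / 4) ^ 3 / 4 < Real.sin (ε / 4) := by
    have := Real.sin_gt_sub_cube hx0
    nlinarith [pow_pos hx0 3]
  have hcl : 1 - (ε / 4) ^ 2 / 2 ≤ Real.cos (ε / 4) := Real.one_sub_sq_div_two_le_cos
  have hcu : Real.cos (ε / 4) ≤ 1 := Real.cos_le_one _
  have hcpos : (1 : ℝ) / 2 ≤ Real.cos (ε / 4) := by nlinarith
  have hcpos' : (0 : ℝ) < Real.cos (ε / 4) := by linarith
  have key : 4 * Real.tan (ε / 4) - ε =
      (4 * Real.sin (ε / 4) - ε * Real.cos (ε / 4)) / Real.cos (ε / 4) := by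
    rw [Real.tan_eq_sin_div_cos]
    field_simp
  rw [key, abs_div, abs_of_pos hcpos', div_le_iff₀ hcpos']
  rw [abs_le]
  constructor <;> nlinarith [sq_nonneg ε, sq_nonneg (ε / 4), mul_pos h0 h0]

theorem rhombus_kernel_expansion (p : ℝ) (hp : p ∈ Set.Ico (0 : ℝ) (π / 2)) :
    (fun ε : ℝ => kRhombus p (p + ε) -
        ε * (Real.sin (p / 2) ^ 4 + Real.cos (p / 2) ^ 4))
      =O[nhdsWithin 0 (Set.Ioi 0)] (fun ε : ℝ => ε ^ 2) := by
  set C : ℝ := Real.sin (p / 2) ^ 4 + Real.cos (p / 2) ^ 4 with hC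
  set F : ℝ → ℝ := fun ε => Real.sin ((p + (p + ε)) / 4) ^ 2 * Real.sin (p / 2) *
      Real.sin ((p + ε) / 2) +
      Real.cos ((p + (p + ε)) / 4) ^ 2 * Real.cos (p / 2) * Real.cos ((p + ε) / 2) with hF
  have hF0 : F 0 = C := by
    have h1 : (p + (p + 0)) / 4 = p / 2 := by ring
    have h2 : (p + 0) / 2 = p / 2 := by ring
    simp only [hF, h1, h2, hC]
    ring
  have hFdiff : DifferentiableAt ℝ F 0 := by
    apply DifferentiableAt.add <;> fun_prop
  have hB : (fun ε => F ε - C) =O[𝓝 (0 : ℝ)] fun ε => ε := by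
    have h := hFdiff.hasFDerivAt.isBigO_sub
    simpa [hF0] using h
  have hA : (fun ε : ℝ => 4 * Real.tan (ε / 4)) =O[𝓝 (0 : ℝ)] fun ε => ε := by
    have hcos : Real.cos ((0 : ℝ) / 4) ≠ 0 := by norm_num
    have h1 : HasDerivAt (fun x : ℝ => Real.tan (x / 4))
        (1 / Real.cos ((0 : ℝ) / 4) ^ 2 * (1 / 4)) 0 := by
      exact (Real.hasDerivAt_tan hcos).comp 0 ((hasDerivAt_id (0 : ℝ)).div_const 4)
    have h2 := (h1.const_mul 4).hasFDerivAt.isBigO_sub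
    simpa using h2
  have hCbig : (fun ε : ℝ => 4 * Real.tan (ε / 4) - ε) =O[𝓝[>] (0 : ℝ)]
      fun ε => ε ^ 2 := by
    rw [isBigO_iff]
    refine ⟨1, ?_⟩
    filter_upwards [Ioo_mem_nhdsGT (by norm_num : (0 : ℝ) < 1)] with ε hε
    rw [Real.norm_eq_abs, Real.norm_eq_abs, one_mul, abs_pow, abs_of_pos hε.1]
    exact tan_taylor_bound hε.1 hε.2.le
  have hsum : (fun ε : ℝ => 4 * Real.tan (ε / 4) * F ε - ε * C) =O[𝓝[>] (0 : ℝ)]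
      fun ε => ε ^ 2 := by
    have e1 : (fun ε : ℝ => 4 * Real.tan (ε / 4) * (F ε - C)) =O[𝓝[>] (0 : ℝ)]
        fun ε => ε ^ 2 := by
      have hA' : (fun ε : ℝ => 4 * Real.tan (ε / 4)) =O[𝓝[>] (0 : ℝ)] fun ε => ε :=
        hA.mono nhdsWithin_le_nhds
      have hB' : (fun ε => F ε - C) =O[𝓝[>] (0 : ℝ)] fun ε => ε :=
        hB.mono nhdsWithin_le_nhds
      refine (hA'.mul hB').trans (IsBigO.of_bound 1 ?_)
      filter_upwards with ε
      simp [sq, abs_mul]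
    have e2 : (fun ε : ℝ => C * (4 * Real.tan (ε / 4) - ε)) =O[𝓝[>] (0 : ℝ)]
        fun ε => ε ^ 2 := hCbig.const_mul_left C
    have e3 := e1.add e2
    refine e3.congr_left fun ε => ?_
    ring
  have heq : (fun ε : ℝ => kRhombus p (p + ε) - ε * C) =ᶠ[𝓝[>] (0 : ℝ)]
      (fun ε : ℝ => 4 * Real.tan (ε / 4) * F ε - ε * C) := by
    filter_upwards [Ioo_mem_nhdsGT (by norm_num : (0 : ℝ) < 1)] with ε hε
    obtain ⟨hε0, hε1⟩ := hε
    have hne : p ≠ p + ε := by linarith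
    have habs : |p - (p + ε)| = ε := by
      rw [show p - (p + ε) = -ε by ring, abs_neg, abs_of_pos hε0]
    have hsin4 : Real.sin (ε / 4) ≠ 0 := by
      have := Real.sin_pos_of_pos_of_lt_pi (show 0 < ε / 4 by linarith)
        (by nlinarith [Real.pi_gt_three])
      linarith
    have hcos4 : Real.cos (ε / 4) ≠ 0 := by
      have := Real.cos_pos_of_mem_Ioo (show ε / 4 ∈ Set.Ioo (-(π / 2)) (π / 2) by
        constructor <;> nlinarith [Real.pi_gt_three])
      linarith
    have hhalf : Real.sin (ε / 2) = 2 * Real.sin (ε / 4) * Real.cos (ε / 4) := by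
      rw [show ε / 2 = 2 * (ε / 4) by ring, Real.sin_two_mul]
    simp only [kRhombus, if_neg hne, habs, hhalf, hF, Real.tan_eq_sin_div_cos]
    field_simp
    ring
  exact hsum.congr' heq.symm EventuallyEq.rfl
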